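/- Let 𝒴 be a finite linearly ordered set and let Q, Q' : 𝒴 → (0,1] be strictly positive probability mass functions on 𝒴. Let γ ∈ (0,1) and η ∈ (−1,∞), let (w_k)_{k≥1} be the truncated negative binomial distribution D_{η,γ} with mean m and probability generating function φ(z) = ∑_{k≥1} w_k z^k, and define A(y) = φ(Q(≤y)) − φ(Q(<y)) and A'(y) = φ(Q'(≤y)) − φ(Q'(<y)). Let δ : ℝ → [0,∞) be such that for every s ∈ ℝ both ∑_y max(Q(y) − e^s Q'(y), 0) ≤ δ(s) and ∑_y max(Q'(y) − e^s Q(y), 0) ≤ δ(s). Then for every ε ∈ ℝ and every ε₁ ≥ 0: ∑_{y∈𝒴} max(A(y) − e^ε·A'(y), 0) ≤ m · δ(ε̂), where ε̂ = ε − (η+1)·log( e^{ε₁} + ((1−γ)/γ)·δ(ε₁) ). -/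

import Mathlib

open Finset Real

/-- Cumulative mass `Q(≤ y)` of a pmf on a finite linearly ordered set. -/
noncomputable def cumLE {Y : Type*} [Fintype Y] [LinearOrder Y] (Q : Y → ℝ) (y : Y) : ℝ :=
  ∑ z ∈ Finset.univ.filter (fun z => z ≤ y), Q z

/-- Cumulative mass `Q(< y)` of a pmf on a finite linearly ordered set. -/
noncomputable def cumLT {Y : Type*} [Fintype Y] [LinearOrder Y] (Q : Y → ℝ) (y : Y) : ℝ :=
  ∑ z ∈ Finset.univ.filter (fun z => z < y), Q z

/-- The pmf of the truncated negative binomial distribution `D_{η,γ}` (supported on `k ≥ 1`). -/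
noncomputable def negBinPMF (η γ : ℝ) (k : ℕ) : ℝ :=
  if k = 0 then 0
  else if η = 0 then (1 - γ) ^ k / (k * Real.log (1 / γ))
  else (1 - γ) ^ k / (γ ^ (-η) - 1) * ∏ i ∈ Finset.range k, ((i + η) / (i + 1))

/-- The mean of the truncated negative binomial distribution `D_{η,γ}`. -/
noncomputable def negBinMean (η γ : ℝ) : ℝ :=
  if η = 0 then (1 / γ - 1) / Real.log (1 / γ)
  else η * (1 - γ) / (γ * (1 - γ ^ η))

/-- The probability generating function of a distribution `w` on ℕ. -/
noncomputable def pgf (w : ℕ → ℝ) (z : ℝ) : ℝ := ∑' k : ℕ, w k * z ^ k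

set_option maxHeartbeats 1000000
section PrivSelAux
open Filter



noncomputable def binCoef (η : ℝ) (k : ℕ) : ℝ := ∏ i ∈ Finset.range k, ((i + η) / (i + 1))

lemma binCoef_succ (η : ℝ) (k : ℕ) :
    binCoef η (k+1) = binCoef η k * ((k + η) / (k + 1)) := Finset.prod_range_succ _ _

lemma binCoef_zero (η : ℝ) : binCoef η 0 = 1 := Finset.prod_range_zero _

/-- ratio of term magnitudes tends to |x| -/
lemma ratio_tendsto (η x : ℝ) :
    Tendsto (fun k : ℕ => |(k + η) / (k + 1)| * |x|) atTop (nhds |x|) := by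
  have h1 : Tendsto (fun k : ℕ => (k + η) / (k + 1)) atTop (nhds 1) := by
    have h2 : (fun k : ℕ => (k + η) / (k + 1)) =ᶠ[atTop] fun k : ℕ => (1 + η/k) / (1 + 1/k) := by
      filter_upwards [eventually_gt_atTop 0] with k hk
      have hk0 : (k:ℝ) ≠ 0 := Nat.cast_ne_zero.2 hk.ne'
      have hk1 : (k:ℝ) + 1 ≠ 0 := by positivity
      field_simp
    rw [tendsto_congr' h2]
    have h3 : Tendsto (fun k : ℕ => ((k:ℝ))) atTop atTop := tendsto_natCast_atTop_atTop
    have h4 : Tendsto (fun k : ℕ => η/(k:ℝ)) atTop (nhds 0) := Tendsto.div_atTop tendsto_const_nhds h3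
    have h5 : Tendsto (fun k : ℕ => 1/((k:ℝ))) atTop (nhds 0) := Tendsto.div_atTop tendsto_const_nhds h3
    have h6 : Tendsto (fun k : ℕ => (1 + η/k) / (1 + 1/(k:ℝ))) atTop (nhds ((1+0)/(1+0))) :=
      ((tendsto_const_nhds.add h4).div (tendsto_const_nhds.add h5) (show (1:ℝ)+0 ≠ 0 by norm_num))
    simpa using h6
  have := ((h1.abs).mul_const |x|)
  simpa using this

lemma summable_binCoef_mul_pow (η x : ℝ) (hx : |x| < 1) :
    Summable (fun k : ℕ => binCoef η k * x ^ k) := by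
  set r : ℝ := (|x| + 1) / 2 with hr
  have hr1 : r < 1 := by rw [hr]; linarith
  have hxr : |x| < r := by rw [hr]; linarith
  apply summable_of_ratio_norm_eventually_le hr1
  filter_upwards [(ratio_tendsto η x).eventually_lt_const hxr] with k hk
  rw [binCoef_succ]
  have : |binCoef η k * ((k + η) / (k + 1)) * x ^ (k+1)|
      = (|(k + η) / (k + 1)| * |x|) * |binCoef η k * x ^ k| := by
    rw [pow_succ]
    rw [abs_mul, abs_mul, abs_mul, abs_mul]
    ring
  rw [Real.norm_eq_abs, Real.norm_eq_abs, this]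
  exact mul_le_mul_of_nonneg_right hk.le (abs_nonneg _)

/-- derivative-term ratio tends to |x| as well -/
lemma summable_deriv_binCoef (η x : ℝ) (hx : |x| < 1) :
    Summable (fun k : ℕ => |binCoef η k| * (k * |x| ^ (k-1))) := by
  set r : ℝ := (|x| + 1) / 2 with hr
  have hr1 : r < 1 := by rw [hr]; linarith
  have hxr : |x| < r := by rw [hr]; linarith
  apply summable_of_ratio_norm_eventually_le hr1
  have hev : ∀ᶠ k : ℕ in atTop, |(k + η)/(k+1)| * |x| * ((k+1)/k) < r := by
    have h1 : Tendsto (fun k : ℕ => |(k + η) / (k + 1)| * |x| * ((k+1)/k)) atTop (nhds |x|) := by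
      have h3 : Tendsto (fun k : ℕ => ((k:ℝ)+1)/k) atTop (nhds 1) := by
        have h2 : (fun k : ℕ => ((k:ℝ)+1)/k) =ᶠ[atTop] fun k : ℕ => 1 + 1/(k:ℝ) := by
          filter_upwards [eventually_gt_atTop 0] with k hk
          have hk0 : (k:ℝ) ≠ 0 := Nat.cast_ne_zero.2 hk.ne'
          field_simp
        rw [tendsto_congr' h2]
        have h5 : Tendsto (fun k : ℕ => 1/(k:ℝ)) atTop (nhds 0) :=
          Tendsto.div_atTop tendsto_const_nhds tendsto_natCast_atTop_atTop
        simpa using tendsto_const_nhds.add h5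
      have := (ratio_tendsto η x).mul h3
      simpa using this
    exact h1.eventually_lt_const hxr
  filter_upwards [hev, eventually_gt_atTop 0] with k hk hk0
  have hk0' : (0:ℝ) < k := by exact_mod_cast hk0
  have hstep : |binCoef η (k+1)| * ((k+1) * |x|^k)
      = (|(k + η)/(k+1)| * |x| * ((k+1)/k)) * (|binCoef η k| * (k * |x|^(k-1))) := by
    rw [binCoef_succ, abs_mul]
    have hxk : |x|^k = |x|^(k-1) * |x| := by
      conv_lhs => rw [show k = (k-1)+1 by omega]
      rw [pow_succ]
    rw [hxk]
    have hkk : ((k:ℝ)+1)/k * k = (k:ℝ)+1 := by field_simp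
    field_simp
  rw [Real.norm_eq_abs, Real.norm_eq_abs]
  have hnn : 0 ≤ |binCoef η k| * (k * |x|^(k-1)) := by positivity
  rw [abs_of_nonneg (by positivity), abs_of_nonneg hnn]
  push_cast
  rw [hstep]
  exact mul_le_mul_of_nonneg_right hk.le hnn

noncomputable def binF (η x : ℝ) : ℝ := ∑' k : ℕ, binCoef η k * x ^ k
noncomputable def binFd (η x : ℝ) : ℝ := ∑' k : ℕ, binCoef η k * (k * x ^ (k-1))


lemma summable_deriv_binCoef' (η x : ℝ) (hx : |x| < 1) :
    Summable (fun k : ℕ => binCoef η k * (k * x ^ (k-1))) := by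
  apply Summable.of_abs
  apply (summable_deriv_binCoef η x hx).congr
  intro k
  rw [abs_mul, abs_mul, abs_pow, Nat.abs_cast]

lemma binF_hasDerivAt (η x : ℝ) (hx : |x| < 1) :
    HasDerivAt (binF η) (binFd η x) x := by
  set ρ : ℝ := (|x| + 1) / 2 with hρ
  have hρ1 : ρ < 1 := by rw [hρ]; linarith
  have hxρ : |x| < ρ := by rw [hρ]; linarith
  have hρ0 : 0 < ρ := by rw [hρ]; positivity
  apply hasDerivAt_tsum_of_isPreconnected
    (summable_deriv_binCoef η ρ (by rwa [abs_of_pos hρ0]))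
    (Metric.isOpen_ball (x := (0:ℝ)) (ε := ρ))
    ((convex_ball (0:ℝ) ρ).isPreconnected)
    (g' := fun k y => binCoef η k * (k * y ^ (k-1))) (y₀ := 0)
  · intro k y _
    have h := hasDerivAt_pow k y
    exact h.const_mul (binCoef η k)
  · intro k y hy
    rw [Real.norm_eq_abs, abs_mul, abs_mul, Nat.abs_cast, abs_pow]
    rw [abs_of_pos hρ0]
    have hyρ : |y| ≤ |ρ| := by
      rw [abs_of_pos hρ0]
      simpa [Real.dist_eq] using (Metric.mem_ball.1 hy).le
    rw [abs_of_pos hρ0] at hyρ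
    have h1 : |y|^(k-1) ≤ ρ^(k-1) := pow_le_pow_left₀ (abs_nonneg _) hyρ _
    have h2 : (k:ℝ) * |y|^(k-1) ≤ k * ρ^(k-1) := by
      apply mul_le_mul_of_nonneg_left h1 (by positivity)
    exact mul_le_mul_of_nonneg_left h2 (abs_nonneg _)
  · simpa [Metric.mem_ball, Real.dist_eq] using hρ0
  · apply (summable_binCoef_mul_pow η 0 (by simp)).congr; intro k; rfl
  · simpa [Metric.mem_ball, Real.dist_eq] using hxρ

lemma binF_ode (η x : ℝ) (hx : |x| < 1) :
    (1 - x) * binFd η x = η * binF η x := by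
  have hS0 : Summable (fun k : ℕ => binCoef η k * (k * x ^ (k-1))) :=
    summable_deriv_binCoef' η x hx
  have hSf : Summable (fun k : ℕ => binCoef η k * x ^ k) := summable_binCoef_mul_pow η x hx
  have hpt : ∀ k : ℕ, x * (binCoef η k * (k * x ^ (k-1))) = binCoef η k * k * x ^ k := by
    intro k
    cases k with
    | zero => simp
    | succ n => simp [pow_succ]; ring
  have hS1 : Summable (fun k : ℕ => binCoef η k * k * x ^ k) :=
    (hS0.mul_left x).congr hpt
  have hS2 : Summable (fun k : ℕ => η * (binCoef η k * x ^ k)) := hSf.mul_left η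
  have hshift : binFd η x = ∑' k : ℕ, binCoef η (k+1) * ((k+1) * x ^ k) := by
    rw [binFd, Summable.tsum_eq_zero_add hS0]
    simp
  have hxfd : x * binFd η x = ∑' k : ℕ, binCoef η k * k * x ^ k := by
    rw [binFd, ← tsum_mul_left]
    exact tsum_congr hpt
  have hηf : η * binF η x = ∑' k : ℕ, η * (binCoef η k * x ^ k) := by
    rw [binF, ← tsum_mul_left]
  have key : ∀ k : ℕ, binCoef η (k+1) * ((k+1) * x ^ k)
      = binCoef η k * k * x ^ k + η * (binCoef η k * x ^ k) := by
    intro k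
    rw [binCoef_succ]
    have hk1 : ((k:ℝ)+1) ≠ 0 := by positivity
    field_simp
  have hmain : binFd η x = x * binFd η x + η * binF η x := by
    rw [hxfd, hηf, hshift, ← Summable.tsum_add hS1 hS2]
    exact tsum_congr key
  linarith [hmain]

lemma binF_zero (η : ℝ) : binF η 0 = 1 := by
  rw [binF, tsum_eq_single 0 (by intro k hk; simp [zero_pow hk])]
  simp [binCoef_zero]

lemma aux_hasDerivAt (η x : ℝ) (hx : |x| < 1) :
    HasDerivAt (fun t => binF η t * (1-t) ^ η) 0 x := by
  have hx1 : (0:ℝ) < 1 - x := by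
    have := abs_lt.1 hx; linarith [this.2]
  have h1 : HasDerivAt (fun t : ℝ => (1-t) ^ η) (η * (1-x) ^ (η-1) * (-1)) x := by
    have hrpow : HasDerivAt (fun u : ℝ => u ^ η) (η * (1-x) ^ (η-1)) (1-x) :=
      Real.hasDerivAt_rpow_const (Or.inl hx1.ne')
    have hin : HasDerivAt (fun t : ℝ => 1 - t) (-1) x := by
      simpa using (hasDerivAt_id x).const_sub 1
    exact hrpow.comp x hin
  have h2 := (binF_hasDerivAt η x hx).mul h1
  have hval : binFd η x * (1-x) ^ η + binF η x * (η * (1-x) ^ (η-1) * (-1)) = 0 := by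
    have hsplit : (1-x) ^ η = (1-x) ^ (η-1) * (1-x) := by
      rw [← Real.rpow_add_one hx1.ne' (η-1)]
      ring_nf
    rw [hsplit]
    have hode := binF_ode η x hx
    linear_combination ((1-x) ^ (η-1)) * hode
  rw [hval] at h2
  exact h2

lemma binF_closed (η x : ℝ) (hx : |x| < 1) : binF η x = (1-x) ^ (-η) := by
  have hx1 : (0:ℝ) < 1 - x := by have := abs_lt.1 hx; linarith [this.2]
  have hconst : binF η x * (1-x) ^ η = 1 := by
    have habs : ∀ z ∈ Set.Icc (min 0 x) (max 0 x), |z| < 1 := by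
      intro z hz
      rcases abs_lt.1 hx with ⟨hx1', hx2⟩
      rcases hz with ⟨h1, h2⟩
      rw [abs_lt]
      constructor
      · calc (-1:ℝ) < min 0 x := by rcases min_cases 0 x with ⟨he,_⟩|⟨he,_⟩ <;> rw [he] <;> linarith
          _ ≤ z := h1
      · calc z ≤ max 0 x := h2
          _ < 1 := by rcases max_cases 0 x with ⟨he,_⟩|⟨he,_⟩ <;> rw [he] <;> linarith
    have hc := constant_of_has_deriv_right_zero
      (f := fun t => binF η t * (1-t) ^ η) (a := min 0 x) (b := max 0 x)
      (fun z hz => ((aux_hasDerivAt η z (habs z hz)).continuousAt).continuousWithinAt)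
      (fun z hz => ((aux_hasDerivAt η z (habs z (Set.mem_Icc_of_Ico hz))).hasDerivWithinAt))
    have h0 := hc 0 ⟨min_le_left 0 x, le_max_left 0 x⟩
    have hxv := hc x ⟨min_le_right 0 x, le_max_right 0 x⟩
    have heq : binF η x * (1-x) ^ η = binF η 0 * (1-(0:ℝ)) ^ η := by
      rw [hxv, h0]
    rw [heq, binF_zero]
    norm_num
  have hpos : (0:ℝ) < (1-x) ^ η := Real.rpow_pos_of_pos hx1 η
  rw [Real.rpow_neg hx1.le]
  field_simp
  rw [mul_comm] at hconst
  linarith [hconst]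

lemma rpow_ne_one_of_ne_zero {γ η : ℝ} (hγ0 : 0 < γ) (hγ1 : γ < 1) (hη : η ≠ 0) :
    γ ^ η ≠ 1 := by
  rw [Real.rpow_def_of_pos hγ0]
  rw [Ne, Real.exp_eq_one_iff]
  exact mul_ne_zero (Real.log_ne_zero_of_pos_of_ne_one hγ0 (by linarith)) hη

lemma log_one_div_pos {γ : ℝ} (hγ0 : 0 < γ) (hγ1 : γ < 1) : 0 < Real.log (1/γ) := by
  rw [one_div, Real.log_inv]
  linarith [Real.log_neg hγ0 hγ1]

/-- closed form of the pgf on `Ioo (-(1/(1-γ))) (1/(1-γ))`. -/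
lemma pgf_negBin_eq {γ η : ℝ} (hγ0 : 0 < γ) (hγ1 : γ < 1) (t : ℝ)
    (ht : |(1-γ)*t| < 1) :
    pgf (negBinPMF η γ) t =
      if η = 0 then Real.log (1 - (1-γ)*t) / Real.log γ
      else ((1 - (1-γ)*t) ^ (-η) - 1) / (γ ^ (-η) - 1) := by
  set u : ℝ := (1-γ)*t with hu
  by_cases hη : η = 0
  · simp only [hη, if_true]
    set L : ℝ := Real.log (1/γ) with hL
    have hL0 : 0 < L := log_one_div_pos hγ0 hγ1
    have hHS := Real.hasSum_pow_div_log_of_abs_lt_one ht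
    have hsucc : ∀ k : ℕ, negBinPMF 0 γ (k+1) * t^(k+1) = u^(k+1)/((k+1) : ℝ) * L⁻¹ := by
      intro k
      simp only [negBinPMF, hη, Nat.succ_ne_zero, if_false, if_true]
      rw [hu, mul_pow]
      push_cast
      field_simp
      rw [← hL, mul_div_assoc, div_self hL0.ne', mul_one]
    have hsum1 : Summable (fun k : ℕ => negBinPMF 0 γ (k+1) * t^(k+1)) := by
      apply ((hHS.summable).mul_right L⁻¹).congr
      intro k; rw [hsucc k]
    have hsummable : Summable (fun k : ℕ => negBinPMF 0 γ k * t^k) :=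
      (summable_nat_add_iff 1).1 hsum1
    rw [show pgf (negBinPMF 0 γ) t = ∑' k : ℕ, negBinPMF 0 γ k * t^k from rfl,
      Summable.tsum_eq_zero_add hsummable]
    have h0 : negBinPMF 0 γ 0 * t^0 = 0 := by simp [negBinPMF]
    rw [h0, zero_add]
    have : ∑' k : ℕ, negBinPMF 0 γ (k+1) * t^(k+1) = (-Real.log (1-u)) * L⁻¹ := by
      rw [← hHS.tsum_eq, ← tsum_mul_right]
      exact tsum_congr hsucc
    rw [this, hL, one_div, Real.log_inv]
    have hlogγ : Real.log γ ≠ 0 := Real.log_ne_zero_of_pos_of_ne_one hγ0 (by linarith)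
    field_simp
  · simp only [hη, if_false]
    set C : ℝ := γ ^ (-η) - 1 with hC
    have hC0 : C ≠ 0 := by
      rw [hC, sub_ne_zero]
      exact rpow_ne_one_of_ne_zero hγ0 hγ1 (neg_ne_zero.2 hη)
    have hsucc : ∀ k : ℕ, negBinPMF η γ (k+1) * t^(k+1) = binCoef η (k+1) * u^(k+1) * C⁻¹ := by
      intro k
      simp only [negBinPMF, Nat.succ_ne_zero, if_false, hη]
      rw [binCoef, hu, mul_pow]
      rw [← hC]
      ring
    have hSb : Summable (fun k : ℕ => binCoef η k * u ^ k) := summable_binCoef_mul_pow η u ht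
    have hsum1 : Summable (fun k : ℕ => negBinPMF η γ (k+1) * t^(k+1)) := by
      apply (((summable_nat_add_iff 1).2 hSb).mul_right C⁻¹).congr
      intro k; rw [hsucc k]
    have hsummable : Summable (fun k : ℕ => negBinPMF η γ k * t^k) :=
      (summable_nat_add_iff 1).1 hsum1
    rw [show pgf (negBinPMF η γ) t = ∑' k : ℕ, negBinPMF η γ k * t^k from rfl,
      Summable.tsum_eq_zero_add hsummable]
    have h0 : negBinPMF η γ 0 * t^0 = 0 := by simp [negBinPMF]
    rw [h0, zero_add]
    have hshift : ∑' k : ℕ, binCoef η (k+1) * u^(k+1) = binF η u - 1 := by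
      have := Summable.tsum_eq_zero_add hSb
      rw [binCoef_zero] at this
      rw [show binF η u = ∑' k : ℕ, binCoef η k * u ^ k from rfl, this]
      rw [pow_zero, one_mul]
      ring
    have : ∑' k : ℕ, negBinPMF η γ (k+1) * t^(k+1) = (binF η u - 1) * C⁻¹ := by
      rw [← hshift, ← tsum_mul_right]
      exact tsum_congr hsucc
    rw [this, binF_closed η u ht]
    field_simp

lemma negBinMean_nonneg {γ η : ℝ} (hγ0 : 0 < γ) (hγ1 : γ < 1) (hη : -1 < η) :
    0 ≤ negBinMean η γ := by
  rw [negBinMean]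
  by_cases hη0 : η = 0
  · simp only [hη0, if_true]
    have h1 : 0 < 1/γ - 1 := by
      have : 1 < 1/γ := (one_lt_one_div hγ0 hγ1)
      linarith
    have h2 := log_one_div_pos hγ0 hγ1
    exact div_nonneg h1.le h2.le
  · simp only [hη0, if_false]
    have hlog : Real.log γ < 0 := Real.log_neg hγ0 hγ1
    rcases lt_or_gt_of_ne hη0 with hneg | hpos
    · have hγη : 1 < γ ^ η := by
        rw [Real.rpow_def_of_pos hγ0]
        rw [show (1:ℝ) = Real.exp 0 by simp]
        apply Real.exp_lt_exp.2
        nlinarith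
      rw [div_nonneg_iff]
      right
      constructor <;> nlinarith
    · have hγη : γ ^ η < 1 := by
        rw [Real.rpow_def_of_pos hγ0]
        rw [show (1:ℝ) = Real.exp 0 by simp]
        apply Real.exp_lt_exp.2
        nlinarith
      apply div_nonneg <;> nlinarith

lemma pgf_negBin_hasDerivAt {γ η : ℝ} (hγ0 : 0 < γ) (hγ1 : γ < 1) (hη : -1 < η)
    (t : ℝ) (ht0 : 0 ≤ t) (ht1 : t ≤ 1) :
    HasDerivAt (pgf (negBinPMF η γ))
      (negBinMean η γ * (γ / (1 - (1-γ)*t)) ^ (η+1)) t := by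
  set R : ℝ := 1/(1-γ) with hR
  have h1γ : 0 < 1 - γ := by linarith
  have hR1 : 1 < R := one_lt_one_div (by linarith) (by linarith)
  have htR : t ∈ Set.Ioo (-R) R := ⟨by linarith, by linarith⟩
  have hmem : Set.Ioo (-R) R ∈ nhds t := Ioo_mem_nhds htR.1 htR.2
  have habs : ∀ z ∈ Set.Ioo (-R) R, |(1-γ)*z| < 1 := by
    intro z hz
    rw [abs_mul, abs_of_pos h1γ]
    have hzR : |z| < R := abs_lt.2 ⟨by linarith [hz.1], by linarith [hz.2]⟩
    calc (1-γ)*|z| < (1-γ)*R := mul_lt_mul_of_pos_left hzR h1γ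
      _ = 1 := by rw [hR]; field_simp
  have hv : 0 < 1 - (1-γ)*t := by nlinarith
  have hlogγ : Real.log γ ≠ 0 := Real.log_ne_zero_of_pos_of_ne_one hγ0 (by linarith)
  have hinner : HasDerivAt (fun z : ℝ => 1 - (1-γ)*z) (-(1-γ)) t := by
    simpa using ((hasDerivAt_id t).const_mul (1-γ)).const_sub 1
  by_cases hη0 : η = 0
  · have heq : (fun z => Real.log (1 - (1-γ)*z) / Real.log γ) =ᶠ[nhds t] pgf (negBinPMF η γ) := by
      apply Filter.eventuallyEq_of_mem hmem
      intro z hz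
      rw [pgf_negBin_eq hγ0 hγ1 z (habs z hz), hη0]
      simp
    apply HasDerivAt.congr_of_eventuallyEq _ heq.symm
    have hlog : HasDerivAt (fun z : ℝ => Real.log (1 - (1-γ)*z))
        ((1 - (1-γ)*t)⁻¹ * (-(1-γ))) t := by
      have := (Real.hasDerivAt_log hv.ne').comp t hinner; exact this
    have := hlog.div_const (Real.log γ)
    refine this.congr_deriv ?_
    rw [hη0, negBinMean]
    simp only [if_true]
    rw [show (0:ℝ)+1 = 1 by norm_num, Real.rpow_one, one_div, Real.log_inv]
    field_simp
  · have heq : (fun z => ((1 - (1-γ)*z) ^ (-η) - 1) / (γ ^ (-η) - 1)) =ᶠ[nhds t] pgf (negBinPMF η γ) := by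
      apply Filter.eventuallyEq_of_mem hmem
      intro z hz
      rw [pgf_negBin_eq hγ0 hγ1 z (habs z hz)]
      simp [hη0]
    apply HasDerivAt.congr_of_eventuallyEq _ heq.symm
    have hrpow : HasDerivAt (fun u : ℝ => u ^ (-η)) ((-η) * (1 - (1-γ)*t) ^ (-η-1)) (1 - (1-γ)*t) :=
      Real.hasDerivAt_rpow_const (Or.inl hv.ne')
    have hcomp : HasDerivAt (fun z : ℝ => (1 - (1-γ)*z) ^ (-η))
        ((-η) * (1 - (1-γ)*t) ^ (-η-1) * (-(1-γ))) t := by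
        have := hrpow.comp t hinner; exact this
    have := (hcomp.sub_const 1).div_const (γ ^ (-η) - 1)
    refine this.congr_deriv ?_
    set v : ℝ := 1 - (1-γ)*t with hvdef
    have hγη : (0:ℝ) < γ ^ η := Real.rpow_pos_of_pos hγ0 η
    have hγη1 : γ ^ η ≠ 1 := rpow_ne_one_of_ne_zero hγ0 hγ1 hη0
    have hγnegη : γ ^ (-η) = (γ ^ η)⁻¹ := Real.rpow_neg hγ0.le η
    have hvpow : (γ / v) ^ (η+1) = γ ^ (η+1) / v ^ (η+1) :=
      Real.div_rpow hγ0.le (by positivity) _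
    have hva : v ^ (-η-1) = (v ^ (η+1))⁻¹ := by
      rw [show -η-1 = -(η+1) by ring, Real.rpow_neg hv.le]
    have hγa : γ ^ (η+1) = γ ^ η * γ := Real.rpow_add_one hγ0.ne' η
    have hvp : (0:ℝ) < v ^ (η+1) := Real.rpow_pos_of_pos hv _
    rw [negBinMean]
    simp only [hη0, if_false]
    rw [hvpow, hva, hγa, hγnegη]
    have h1mη : 1 - γ ^ η ≠ 0 := sub_ne_zero.2 (Ne.symm hγη1)
    have hd : (γ ^ η)⁻¹ - 1 ≠ 0 := by
      rw [sub_ne_zero, Ne, inv_eq_one]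
      exact hγη1
    field_simp

lemma cumLE_eq_cumLT_add {Y : Type*} [Fintype Y] [LinearOrder Y] (Q : Y → ℝ) (y : Y) :
    cumLE Q y = cumLT Q y + Q y := by
  have h : Finset.univ.filter (fun z => z ≤ y) = insert y (Finset.univ.filter (fun z => z < y)) := by
    ext z
    simp [le_iff_lt_or_eq, or_comm]
  rw [cumLE, h, Finset.sum_insert (by simp)]
  rw [cumLT]
  ring

lemma cumLE_add_gt {Y : Type*} [Fintype Y] [LinearOrder Y] (Q : Y → ℝ) (y : Y) :
    cumLE Q y + ∑ z ∈ Finset.univ.filter (fun z => y < z), Q z = ∑ z, Q z := by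
  rw [cumLE]
  have h := Finset.sum_filter_add_sum_filter_not Finset.univ (fun z => z ≤ y) Q
  rw [← h]
  congr 1
  apply Finset.sum_congr _ (fun _ _ => rfl)
  ext z
  simp [not_le]


end PrivSelAux

/-- Theorem 5.2: hockey-stick privacy-profile bound for private selection with a
truncated negative binomial number of candidates. -/
theorem private_selection_negbin_bound
    {Y : Type*} [Fintype Y] [LinearOrder Y]
    (Q Q' : Y → ℝ)
    (hQ_pos : ∀ y, 0 < Q y) (hQ_le : ∀ y, Q y ≤ 1) (hQ_sum : ∑ y, Q y = 1)
    (hQ'_pos : ∀ y, 0 < Q' y) (hQ'_le : ∀ y, Q' y ≤ 1) (hQ'_sum : ∑ y, Q' y = 1)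
    (γ η : ℝ) (hγ : γ ∈ Set.Ioo (0 : ℝ) 1) (hη : -1 < η)
    (m : ℝ) (hm : m = negBinMean η γ)
    (A A' : Y → ℝ)
    (hA : ∀ y, A y = pgf (negBinPMF η γ) (cumLE Q y) - pgf (negBinPMF η γ) (cumLT Q y))
    (hA' : ∀ y, A' y = pgf (negBinPMF η γ) (cumLE Q' y) - pgf (negBinPMF η γ) (cumLT Q' y))
    (δ : ℝ → ℝ) (hδ_nonneg : ∀ s, 0 ≤ δ s)
    (hδ : ∀ s, ∑ y, max (Q y - Real.exp s * Q' y) 0 ≤ δ s)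
    (hδ' : ∀ s, ∑ y, max (Q' y - Real.exp s * Q y) 0 ≤ δ s)
    (ε ε₁ : ℝ) (hε₁ : 0 ≤ ε₁) :
    ∑ y, max (A y - Real.exp ε * A' y) 0
      ≤ m * δ (ε - (η + 1) * Real.log (Real.exp ε₁ + ((1 - γ) / γ) * δ ε₁)) := by
  obtain ⟨hγ0, hγ1⟩ := hγ
  have h1γ : (0:ℝ) < 1 - γ := by linarith
  have hδ₁0 : 0 ≤ δ ε₁ := hδ_nonneg ε₁
  set D : ℝ := ((1 - γ) / γ) * δ ε₁ with hD
  set c : ℝ := Real.exp ε₁ + D with hc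
  have hD0 : 0 ≤ D := by rw [hD]; positivity
  have hDγ : γ * D = (1-γ) * δ ε₁ := by rw [hD]; field_simp
  have hexp1 : 1 ≤ Real.exp ε₁ := by
    rw [show (1:ℝ) = Real.exp 0 by simp]
    exact Real.exp_le_exp.2 hε₁
  have hc1 : 1 ≤ c := by rw [hc]; linarith
  have hc0 : 0 < c := by linarith
  set εh : ℝ := ε - (η + 1) * Real.log c with hεh
  have hp0 : (0:ℝ) < η + 1 := by linarith
  have hexpε : Real.exp ε = Real.exp εh * c ^ (η+1) := by
    rw [Real.rpow_def_of_pos hc0, ← Real.exp_add, hεh]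
    ring_nf
  have hm0 : 0 ≤ m := hm ▸ negBinMean_nonneg hγ0 hγ1 hη
  set g : ℝ → ℝ := fun x => m * (γ / (1 - (1-γ)*x)) ^ (η+1) with hg
  have hgderiv : ∀ x : ℝ, 0 ≤ x → x ≤ 1 → HasDerivAt (pgf (negBinPMF η γ)) (g x) x := by
    intro x h0 h1
    rw [hg, hm]
    exact pgf_negBin_hasDerivAt hγ0 hγ1 hη x h0 h1
  -- key per-point bound
  have key : ∀ y, A y - Real.exp ε * A' y ≤ m * max (Q y - Real.exp εh * Q' y) 0 := by
    intro y
    set q := Q y with hq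
    set q' := Q' y with hq'
    set a := cumLT Q y with ha
    set a' := cumLT Q' y with ha'
    set T := ∑ z ∈ Finset.univ.filter (fun z => y < z), Q z with hT
    set T' := ∑ z ∈ Finset.univ.filter (fun z => y < z), Q' z with hT'
    have ha0 : 0 ≤ a := Finset.sum_nonneg (fun z _ => (hQ_pos z).le)
    have ha'0 : 0 ≤ a' := Finset.sum_nonneg (fun z _ => (hQ'_pos z).le)
    have hT0 : 0 ≤ T := Finset.sum_nonneg (fun z _ => (hQ_pos z).le)
    have hT'0 : 0 ≤ T' := Finset.sum_nonneg (fun z _ => (hQ'_pos z).le)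
    have hq0 : 0 ≤ q := (hQ_pos y).le
    have hq'0 : 0 ≤ q' := (hQ'_pos y).le
    have hpart : a + q + T = 1 := by
      have h1 := cumLE_add_gt Q y
      have h2 := cumLE_eq_cumLT_add Q y
      rw [hQ_sum] at h1
      rw [h2] at h1
      linarith
    have hpart' : a' + q' + T' = 1 := by
      have h1 := cumLE_add_gt Q' y
      have h2 := cumLE_eq_cumLT_add Q' y
      rw [hQ'_sum] at h1
      rw [h2] at h1
      linarith
    set B : ℝ := m * max (q - Real.exp εh * q') 0 with hB
    have hB0 : 0 ≤ B := mul_nonneg hm0 (le_max_right _ 0)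
    set H : ℝ → ℝ := fun s => pgf (negBinPMF η γ) (a + s*q)
        - Real.exp ε * pgf (negBinPMF η γ) (a' + s*q') with hH
    have hHd : ∀ s ∈ Set.Icc (0:ℝ) 1, HasDerivAt H
        (g (a + s*q) * q - Real.exp ε * (g (a' + s*q') * q')) s := by
      intro s hs
      obtain ⟨hs0, hs1⟩ := hs
      have haff : HasDerivAt (fun s : ℝ => a + s*q) q s := by
        simpa using ((hasDerivAt_id s).mul_const q).const_add a
      have haff' : HasDerivAt (fun s : ℝ => a' + s*q') q' s := by
        simpa using ((hasDerivAt_id s).mul_const q').const_add a'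
      have hsq : s*q ≤ q := mul_le_of_le_one_left hq0 hs1
      have hsq' : s*q' ≤ q' := mul_le_of_le_one_left hq'0 hs1
      have hsq0 : 0 ≤ s*q := mul_nonneg hs0 hq0
      have hsq0' : 0 ≤ s*q' := mul_nonneg hs0 hq'0
      have hin0 : 0 ≤ a + s*q := by linarith
      have hin1 : a + s*q ≤ 1 := by linarith
      have hin0' : 0 ≤ a' + s*q' := by linarith
      have hin1' : a' + s*q' ≤ 1 := by linarith
      have h1 : HasDerivAt (fun s : ℝ => pgf (negBinPMF η γ) (a + s*q)) (g (a + s*q) * q) s :=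
        by have := (hgderiv _ hin0 hin1).comp s haff; exact this
      have h2 : HasDerivAt (fun s : ℝ => Real.exp ε * pgf (negBinPMF η γ) (a' + s*q'))
          (Real.exp ε * (g (a' + s*q') * q')) s :=
        by have := ((hgderiv _ hin0' hin1').comp s haff').const_mul (Real.exp ε); exact this
      exact h1.sub h2
    have hbound : ∀ s ∈ Set.Icc (0:ℝ) 1,
        g (a + s*q) * q - Real.exp ε * (g (a' + s*q') * q') ≤ B := by
      intro s hs
      obtain ⟨hs0, hs1⟩ := hs
      have hsq : s*q ≤ q := mul_le_of_le_one_left hq0 hs1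
      have hsq' : s*q' ≤ q' := mul_le_of_le_one_left hq'0 hs1
      have hsq0 : 0 ≤ s*q := mul_nonneg hs0 hq0
      have hsq0' : 0 ≤ s*q' := mul_nonneg hs0 hq'0
      have hin0 : 0 ≤ a + s*q := by linarith
      have hin1 : a + s*q ≤ 1 := by linarith
      have hin0' : 0 ≤ a' + s*q' := by linarith
      have hin1' : a' + s*q' ≤ 1 := by linarith
      set V : ℝ := 1 - (1-γ)*(a + s*q) with hV
      set V' : ℝ := 1 - (1-γ)*(a' + s*q') with hV'
      have hVγ : γ ≤ V := by
        rw [hV]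
        linarith [mul_le_of_le_one_right h1γ.le hin1]
      have hV'γ : γ ≤ V' := by
        rw [hV']
        linarith [mul_le_of_le_one_right h1γ.le hin1']
      have hV0 : 0 < V := lt_of_lt_of_le hγ0 hVγ
      have hV'0 : 0 < V' := lt_of_lt_of_le hγ0 hV'γ
      -- the δ-based comparison
      have hsum1 : T' - Real.exp ε₁ * T
          ≤ ∑ z ∈ Finset.univ.filter (fun z => y < z), max (Q' z - Real.exp ε₁ * Q z) 0 := by
        rw [hT', hT, Finset.mul_sum, ← Finset.sum_sub_distrib]
        exact Finset.sum_le_sum (fun z _ => le_max_left _ _)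
      have hsum2 : (1-s)*(q' - Real.exp ε₁ * q) ≤ max (q' - Real.exp ε₁ * q) 0 := by
        rcases le_or_gt (q' - Real.exp ε₁ * q) 0 with hneg | hpos
        · calc (1-s)*(q' - Real.exp ε₁ * q) ≤ 0 := mul_nonpos_of_nonneg_of_nonpos (by linarith) hneg
            _ ≤ _ := le_max_right _ 0
        · calc (1-s)*(q' - Real.exp ε₁ * q) ≤ 1*(q' - Real.exp ε₁ * q) :=
              mul_le_mul_of_nonneg_right (by linarith) hpos.le
            _ = q' - Real.exp ε₁ * q := one_mul _
            _ ≤ _ := le_max_left _ _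
      have hsum3 : (∑ z ∈ Finset.univ.filter (fun z => y < z), max (Q' z - Real.exp ε₁ * Q z) 0)
          + max (q' - Real.exp ε₁ * q) 0 ≤ δ ε₁ := by
        have hins : (∑ z ∈ Finset.univ.filter (fun z => y < z), max (Q' z - Real.exp ε₁ * Q z) 0)
            + max (q' - Real.exp ε₁ * q) 0
            = ∑ z ∈ insert y (Finset.univ.filter (fun z => y < z)), max (Q' z - Real.exp ε₁ * Q z) 0 := by
          rw [Finset.sum_insert (by simp)]
          rw [hq, hq']
          ring
        rw [hins]
        calc _ ≤ ∑ z, max (Q' z - Real.exp ε₁ * Q z) 0 := by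
              apply Finset.sum_le_sum_of_subset_of_nonneg (Finset.subset_univ _)
              intro z _ _
              exact le_max_right _ 0
          _ ≤ δ ε₁ := hδ' ε₁
      have hVcomp : V' ≤ c * V := by
        have hVeq : V = γ + (1-γ)*(T + (1-s)*q) := by
          rw [hV]; linear_combination (γ - 1) * hpart
        have hVeq' : V' = γ + (1-γ)*(T' + (1-s)*q') := by
          rw [hV']; linear_combination (γ - 1) * hpart' 
        have hRT : 0 ≤ T + (1-s)*q := by linarith [hsq]
        have hchain : T' + (1-s)*q' ≤ δ ε₁ + Real.exp ε₁ * (T + (1-s)*q) := by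
          linarith [hsum1, hsum2, hsum3]
        rw [hVeq, hVeq', hc]
        have hh1 : (1-γ)*(T' + (1-s)*q') ≤ (1-γ)*(δ ε₁ + Real.exp ε₁ * (T + (1-s)*q)) :=
          mul_le_mul_of_nonneg_left hchain h1γ.le
        have hh2 : γ ≤ Real.exp ε₁ * γ := le_mul_of_one_le_left hγ0.le hexp1
        have hh3 : 0 ≤ D * ((1-γ)*(T + (1-s)*q)) :=
          mul_nonneg hD0 (mul_nonneg h1γ.le hRT)
        linarith [hh1, hh2, hh3, hDγ]
      -- ratio bound on g
      have hfrac : γ/V ≤ c*(γ/V') := by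
        rw [mul_div_assoc', div_le_div_iff₀ hV0 hV'0]
        have := mul_le_mul_of_nonneg_left hVcomp hγ0.le
        linarith [this]
      have hrpow : (γ/V) ^ (η+1) ≤ c ^ (η+1) * (γ/V') ^ (η+1) := by
        calc (γ/V) ^ (η+1) ≤ (c*(γ/V')) ^ (η+1) :=
              Real.rpow_le_rpow (by positivity) hfrac hp0.le
          _ = c ^ (η+1) * (γ/V') ^ (η+1) := Real.mul_rpow hc0.le (by positivity)
      have hgle : g (a + s*q) ≤ c ^ (η+1) * g (a' + s*q') := by
        rw [hg]
        simp only
        rw [← hV, ← hV']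
        calc m * (γ/V) ^ (η+1) ≤ m * (c ^ (η+1) * (γ/V') ^ (η+1)) :=
              mul_le_mul_of_nonneg_left hrpow hm0
          _ = c ^ (η+1) * (m * (γ/V') ^ (η+1)) := by ring
      have hg0 : 0 ≤ g (a + s*q) := by
        rw [hg]; simp only; positivity
      have hgm : g (a + s*q) ≤ m := by
        rw [hg]
        simp only
        rw [← hV]
        have h1 : (γ/V) ^ (η+1) ≤ 1 := by
          apply Real.rpow_le_one (by positivity) _ hp0.le
          rw [div_le_one hV0]
          exact hVγ
        exact mul_le_of_le_one_right hm0 h1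
      -- combine
      have hstep : Real.exp εh * q' * g (a + s*q) ≤ Real.exp ε * (g (a' + s*q') * q') := by
        rw [hexpε]
        calc Real.exp εh * q' * g (a + s*q)
            ≤ Real.exp εh * q' * (c ^ (η+1) * g (a' + s*q')) := by
              apply mul_le_mul_of_nonneg_left hgle (by positivity)
          _ = Real.exp εh * c ^ (η+1) * (g (a' + s*q') * q') := by ring
      have hmid : g (a + s*q) * q - Real.exp ε * (g (a' + s*q') * q')
          ≤ g (a + s*q) * (q - Real.exp εh * q') := by
            have hexpand : g (a + s*q) * (q - Real.exp εh * q')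
                = g (a + s*q) * q - Real.exp εh * q' * g (a + s*q) := by ring
            rw [hexpand]
            linarith [hstep]
      rcases le_or_gt 0 (q - Real.exp εh * q') with hpos | hneg
      · calc g (a + s*q) * q - Real.exp ε * (g (a' + s*q') * q')
            ≤ g (a + s*q) * (q - Real.exp εh * q') := hmid
          _ ≤ m * (q - Real.exp εh * q') := mul_le_mul_of_nonneg_right hgm hpos
          _ ≤ B := by rw [hB]; exact mul_le_mul_of_nonneg_left (le_max_left _ _) hm0
      · calc g (a + s*q) * q - Real.exp ε * (g (a' + s*q') * q')
            ≤ g (a + s*q) * (q - Real.exp εh * q') := hmid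
          _ ≤ 0 := mul_nonpos_of_nonneg_of_nonpos hg0 hneg.le
          _ ≤ B := hB0
    -- MVT
    set G : ℝ → ℝ := fun s => B * s - H s with hG
    have hGd : ∀ s ∈ Set.Icc (0:ℝ) 1, HasDerivAt G
        (B - (g (a + s*q) * q - Real.exp ε * (g (a' + s*q') * q'))) s := by
      intro s hs
      have h1 : HasDerivAt (fun s : ℝ => B * s) B s := by
        simpa using (hasDerivAt_id s).const_mul B
      exact h1.sub (hHd s hs)
    have hGmono : MonotoneOn G (Set.Icc 0 1) := by
      apply monotoneOn_of_deriv_nonneg (convex_Icc 0 1)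
      · intro s hs
        exact ((hGd s hs).continuousAt).continuousWithinAt
      · rw [interior_Icc]
        intro s hs
        exact ((hGd s (Set.mem_Icc_of_Ioo hs)).differentiableAt).differentiableWithinAt
      · rw [interior_Icc]
        intro s hs
        rw [(hGd s (Set.mem_Icc_of_Ioo hs)).deriv]
        have := hbound s (Set.mem_Icc_of_Ioo hs)
        linarith
    have hG01 : G 0 ≤ G 1 := hGmono (Set.mem_Icc.2 ⟨le_refl 0, zero_le_one⟩)
      (Set.mem_Icc.2 ⟨zero_le_one, le_refl 1⟩) zero_le_one
    have hH1 : H 1 - H 0 ≤ B := by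
      have : G 0 = -H 0 := by rw [hG]; simp
      have h2 : G 1 = B - H 1 := by rw [hG]; simp
      rw [this, h2] at hG01
      linarith
    have hHval : A y - Real.exp ε * A' y = H 1 - H 0 := by
      rw [hA y, hA' y, hH]
      simp only
      rw [cumLE_eq_cumLT_add Q y, cumLE_eq_cumLT_add Q' y]
      rw [← ha, ← ha', ← hq, ← hq']
      ring_nf
    rw [hHval]
    rw [hB] at hH1
    exact hH1
  calc ∑ y, max (A y - Real.exp ε * A' y) 0
      ≤ ∑ y, m * max (Q y - Real.exp εh * Q' y) 0 := by
        apply Finset.sum_le_sum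
        intro y _
        exact max_le (key y) (mul_nonneg hm0 (le_max_right _ 0))
    _ = m * ∑ y, max (Q y - Real.exp εh * Q' y) 0 := by rw [Finset.mul_sum]
    _ ≤ m * δ εh := mul_le_mul_of_nonneg_left (hδ εh) hm0
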